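/- arXiv:1102.1264 — 2 statements merged into one kernel-verified Lean document; each statement's English description precedes it below -/
import Mathlib

section
/- Let f : ℝⁿ → ℝ be convex, and let F₁ and F₂ be two faces of f (intersections of the graph of f with supporting affine hyperplanes) whose relative interiors both contain a common point x. Then there exists a face of f containing both F₁ and F₂ and containing x in its relative interior. -/
open scoped RealInnerProductSpace

/-- A face of a convex function `f`: the intersection of the graph of `f` with a
supporting (non-vertical) affine hyperplane, projected to the domain. -/
def IsFaceOf {n : ℕ} (f : EuclideanSpace ℝ (Fin n) → ℝ)
    (F : Set (EuclideanSpace ℝ (Fin n))) : Prop :=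
  ∃ (c : EuclideanSpace ℝ (Fin n)) (b : ℝ),
    (∀ y, ⟪c, y⟫ + b ≤ f y) ∧ F = {y | f y = ⟪c, y⟫ + b}

/-- From a relative interior point `x` of `s`, one can move a little past `x`
away from any point `y ∈ s` while staying in `s`. -/
lemma exists_pos_smul_mem {E : Type*} [NormedAddCommGroup E] [NormedSpace ℝ E]
    {s : Set E} {x y : E} (hx : x ∈ intrinsicInterior ℝ s) (hy : y ∈ s) :
    ∃ ε : ℝ, 0 < ε ∧ ε • (x - y) + x ∈ s := by
  rw [mem_intrinsicInterior] at hx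
  obtain ⟨u, hu, hux⟩ := hx
  have hxs : x ∈ s := by
    have := interior_subset hu
    simpa [hux] using this
  have hxspan : x ∈ affineSpan ℝ s := subset_affineSpan ℝ s hxs
  have hyspan : y ∈ affineSpan ℝ s := subset_affineSpan ℝ s hy
  have hmem : ∀ t : ℝ, t • (x - y) + x ∈ affineSpan ℝ s := by
    intro t
    have := (affineSpan ℝ s).smul_vsub_vadd_mem t hxspan hyspan hxspan
    simpa [vsub_eq_sub, vadd_eq_add] using this
  set γ : ℝ → affineSpan ℝ s := fun t => ⟨t • (x - y) + x, hmem t⟩ with hγdef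
  have hγcont : Continuous γ := by
    apply Continuous.subtype_mk
    continuity
  have hγ0 : γ 0 = u := by
    apply Subtype.ext
    simp [hγdef, hux]
  have hopen : IsOpen (γ ⁻¹' interior ((↑) ⁻¹' s : Set (affineSpan ℝ s))) :=
    isOpen_interior.preimage hγcont
  have h0 : (0 : ℝ) ∈ γ ⁻¹' interior ((↑) ⁻¹' s : Set (affineSpan ℝ s)) := by
    simp [Set.mem_preimage, hγ0, hu]
  obtain ⟨δ, hδpos, hδ⟩ := Metric.isOpen_iff.mp hopen 0 h0
  refine ⟨δ / 2, by linarith, ?_⟩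
  have hmemball : (δ / 2 : ℝ) ∈ Metric.ball (0 : ℝ) δ := by
    rw [Metric.mem_ball, Real.dist_eq, sub_zero, abs_of_pos (half_pos hδpos)]
    linarith
  have := interior_subset (hδ hmemball)
  simpa [hγdef] using this

lemma face_subset_face {n : ℕ} (f : EuclideanSpace ℝ (Fin n) → ℝ)
    (c₁ c₂ : EuclideanSpace ℝ (Fin n)) (b₁ b₂ : ℝ)
    (hs₂ : ∀ y, ⟪c₂, y⟫ + b₂ ≤ f y)
    (x : EuclideanSpace ℝ (Fin n))
    (hx₁ : x ∈ intrinsicInterior ℝ {y | f y = ⟪c₁, y⟫ + b₁})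
    (hx₂ : f x = ⟪c₂, x⟫ + b₂) :
    {y | f y = ⟪c₁, y⟫ + b₁} ⊆ {y | f y = ⟪c₂, y⟫ + b₂} := by
  intro y hy
  have hxF : x ∈ {y | f y = ⟪c₁, y⟫ + b₁} := intrinsicInterior_subset hx₁
  obtain ⟨ε, hε, hz⟩ := exists_pos_smul_mem hx₁ hy
  set z := ε • (x - y) + x with hzdef
  have hz' : f z = ⟪c₁, z⟫ + b₁ := hz
  have hy' : f y = ⟪c₁, y⟫ + b₁ := hy
  have hx' : f x = ⟪c₁, x⟫ + b₁ := hxF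
  have hz₂ : ⟪c₂, z⟫ + b₂ ≤ f z := hs₂ z
  have hy₂ : ⟪c₂, y⟫ + b₂ ≤ f y := hs₂ y
  have e₁ : ⟪c₁, z⟫ = ε * ⟪c₁, x⟫ - ε * ⟪c₁, y⟫ + ⟪c₁, x⟫ := by
    rw [hzdef]
    rw [inner_add_right, real_inner_smul_right, inner_sub_right]
    ring
  have e₂ : ⟪c₂, z⟫ = ε * ⟪c₂, x⟫ - ε * ⟪c₂, y⟫ + ⟪c₂, x⟫ := by
    rw [hzdef]
    rw [inner_add_right, real_inner_smul_right, inner_sub_right]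
    ring
  show f y = ⟪c₂, y⟫ + b₂
  nlinarith [hz₂, hy₂, hz', hy', hx', hx₂, e₁, e₂, hε]

theorem stmt0 {n : ℕ} (f : EuclideanSpace ℝ (Fin n) → ℝ)
    (hf : ConvexOn ℝ Set.univ f)
    (F₁ F₂ : Set (EuclideanSpace ℝ (Fin n)))
    (h₁ : IsFaceOf f F₁) (h₂ : IsFaceOf f F₂)
    (x : EuclideanSpace ℝ (Fin n))
    (hx₁ : x ∈ intrinsicInterior ℝ F₁) (hx₂ : x ∈ intrinsicInterior ℝ F₂) :
    ∃ F, IsFaceOf f F ∧ F₁ ⊆ F ∧ F₂ ⊆ F ∧ x ∈ intrinsicInterior ℝ F := by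
  obtain ⟨c₁, b₁, hs₁, hF₁⟩ := h₁
  obtain ⟨c₂, b₂, hs₂, hF₂⟩ := h₂
  have hxF₁ : x ∈ F₁ := intrinsicInterior_subset hx₁
  have hxF₂ : x ∈ F₂ := intrinsicInterior_subset hx₂
  have hx1' : f x = ⟪c₁, x⟫ + b₁ := by rw [hF₁] at hxF₁; exact hxF₁
  have hx2' : f x = ⟪c₂, x⟫ + b₂ := by rw [hF₂] at hxF₂; exact hxF₂
  have h12 : F₁ ⊆ F₂ := by
    rw [hF₁, hF₂]
    exact face_subset_face f c₁ c₂ b₁ b₂ hs₂ x (hF₁ ▸ hx₁) hx2'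
  have h21 : F₂ ⊆ F₁ := by
    rw [hF₁, hF₂]
    exact face_subset_face f c₂ c₁ b₂ b₁ hs₁ x (hF₂ ▸ hx₂) hx1'
  exact ⟨F₁, ⟨c₁, b₁, hs₁, hF₁⟩, subset_rfl, h21, hx₁⟩
end

section
/- Let α be an irrational real number and suppose a sequence (tₙ) in ℝ/ℤ contains, for every n ∈ ℕ, an arithmetic progression of length n with common difference α (i.e. there is sₙ ∈ ℝ/ℤ with sₙ, sₙ+α, ..., sₙ+(n−1)α all in the closure of {tₖ}). Then the closure of {tₙ : n ∈ ℕ} in ℝ/ℤ is all of ℝ/ℤ. -/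
lemma dense_zsmul_irrational (α : ℝ) (hα : Irrational α) :
    Dense (Set.range fun k : ℤ => k • ((α : AddCircle (1 : ℝ)))) := by
  have hS : Dense ((AddSubgroup.closure ({α, 1} : Set ℝ) : AddSubgroup ℝ) : Set ℝ) := by
    rcases AddSubgroup.dense_or_cyclic (AddSubgroup.closure ({α, 1} : Set ℝ)) with hd | ⟨a, ha⟩
    · exact hd
    · exfalso
      have h1 : α ∈ AddSubgroup.closure ({α, 1} : Set ℝ) :=
        AddSubgroup.subset_closure (by simp)
      have h2 : (1 : ℝ) ∈ AddSubgroup.closure ({α, 1} : Set ℝ) :=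
        AddSubgroup.subset_closure (by simp)
      rw [ha, AddSubgroup.mem_closure_singleton] at h1 h2
      obtain ⟨m, hm⟩ := h1
      obtain ⟨n, hn⟩ := h2
      rw [zsmul_eq_mul] at hm hn
      have hn0 : (n : ℝ) ≠ 0 := by
        intro hn'; rw [hn', zero_mul] at hn; exact one_ne_zero hn.symm
      refine hα ⟨(m : ℚ) / n, ?_⟩
      push_cast
      rw [div_eq_iff hn0, ← hm, mul_assoc, mul_comm a, hn, mul_one]
  have hcont : Continuous ((↑) : ℝ → AddCircle (1 : ℝ)) := continuous_quotient_mk'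
  have hsurj : Function.Surjective ((↑) : ℝ → AddCircle (1 : ℝ)) :=
    Quotient.exists_rep
  have himg : Dense (((↑) : ℝ → AddCircle (1 : ℝ)) ''
      (AddSubgroup.closure ({α, 1} : Set ℝ) : Set ℝ)) := by
    rw [dense_iff_closure_eq]
    apply Set.eq_univ_of_univ_subset
    calc Set.univ = ((↑) : ℝ → AddCircle (1:ℝ)) '' (closure (AddSubgroup.closure ({α, 1} : Set ℝ) : Set ℝ)) := by
          rw [hS.closure_eq, Set.image_univ, Set.range_eq_univ.mpr hsurj]
      _ ⊆ _ := image_closure_subset_closure_image hcont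
  refine himg.mono ?_
  rintro x ⟨y, hy, rfl⟩
  rw [SetLike.mem_coe, AddSubgroup.mem_closure_pair] at hy
  obtain ⟨m, n, rfl⟩ := hy
  refine ⟨m, ?_⟩
  push_cast
  simp

/-- If `α` is irrational and the closure of `{tₙ}` in `ℝ/ℤ` contains, for every `n`, an
arithmetic progression of length `n` with common difference `α`, then the closure of
`{tₙ}` is the whole circle. -/
theorem stmt8 (α : ℝ) (hα : Irrational α) (t : ℕ → AddCircle (1 : ℝ))
    (h : ∀ n : ℕ, ∃ s : AddCircle (1 : ℝ),
      ∀ i < n, s + (i : ℕ) • ((α : AddCircle (1 : ℝ))) ∈ closure (Set.range t)) :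
    closure (Set.range t) = Set.univ := by
  rw [Set.eq_univ_iff_forall]
  intro x
  rw [← closure_closure (s := Set.range t), Metric.mem_closure_iff]
  intro ε hε
  have hdense := dense_zsmul_irrational α hα
  have hcover : (Set.univ : Set (AddCircle (1:ℝ))) ⊆
      ⋃ k : ℤ, Metric.ball (k • ((α : AddCircle (1:ℝ)))) ε := by
    intro z _
    obtain ⟨y, ⟨k, rfl⟩, hy⟩ := Metric.mem_closure_iff.mp (hdense z) ε hε
    exact Set.mem_iUnion.mpr ⟨k, Metric.mem_ball.mpr hy⟩
  obtain ⟨F, hF⟩ := isCompact_univ.elim_finite_subcover _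
    (fun k : ℤ => Metric.isOpen_ball) hcover
  set M : ℕ := F.sup Int.natAbs with hM
  obtain ⟨s, hs⟩ := h (2 * M + 1)
  set z : AddCircle (1:ℝ) := x - s - (M : ℤ) • ((α : AddCircle (1:ℝ))) with hz
  obtain ⟨k, hkF, hk⟩ := Set.mem_iUnion₂.mp (hF (Set.mem_univ z))
  have hkabs : k.natAbs ≤ M := Finset.le_sup hkF
  have hk1 : -(M:ℤ) ≤ k := by omega
  have hk2 : k ≤ (M:ℤ) := by omega
  have hkM : ((k + M).toNat : ℤ) = k + M := Int.toNat_of_nonneg (by omega)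
  refine ⟨s + ((k + (M:ℤ)).toNat : ℕ) • ((α : AddCircle (1:ℝ))), hs _ (by omega), ?_⟩
  have heq : x - (s + ((k + (M:ℤ)).toNat : ℕ) • ((α : AddCircle (1:ℝ))))
      = z - k • ((α : AddCircle (1:ℝ))) := by
    rw [← natCast_zsmul, hkM, add_zsmul, hz]
    abel
  rw [dist_eq_norm, heq, ← dist_eq_norm]
  exact hk
end
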